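/- Let (M, η, μ) be a monad on a category C with binary coproducts. The category of M-semialgebras (morphisms a : MX → X with a ∘ Ma = a ∘ μ_X, with homomorphisms f : X → Y satisfying f ∘ a = b ∘ Mf) is isomorphic to the Eilenberg–Moore category of the semifree monad M^s, via a ↦ [id_X, a]. -/

import Mathlib

open CategoryTheory CategoryTheory.Limits

universe v u

variable {C : Type u} [Category.{v} C] [HasBinaryCoproducts C]

/-- The underlying functor `Id + M` of the semifree monad. -/
noncomputable def MsF (M : Monad C) : C ⥤ C where
  obj X := X ⨿ M.obj X
  map f := coprod.map f (M.map f)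

/-- The multiplication `μ^s = [id, inr ∘ μ ∘ M[η, id_M]]` of the semifree monad. -/
noncomputable def μs (M : Monad C) (X : C) : (MsF M).obj ((MsF M).obj X) ⟶ (MsF M).obj X :=
  coprod.desc (𝟙 ((MsF M).obj X))
    (M.map (coprod.desc (M.η.app X) (𝟙 (M.obj X))) ≫ M.μ.app X ≫ coprod.inr)

/-- The semifree monad `M^s = (Id + M, inl, [id, inr ∘ μ ∘ M[η, id_M]])` on `M`. -/
noncomputable def MsMonad (M : Monad C) : Monad C where
  toFunctor := MsF M
  η := { app := fun X => (coprod.inl : X ⟶ X ⨿ M.obj X),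
         naturality := by intro X Y f; simp [MsF] }
  μ := { app := fun X => μs M X,
         naturality := by
           intro X Y f
           dsimp [MsF, μs]
           apply coprod.hom_ext
           · simp
             erw [coprod.inl_desc, coprod.inl_desc_assoc, Category.id_comp]
           · rw [coprod.map_desc]
             simp only [coprod.inr_desc]
             rw [← Functor.map_comp_assoc]
             have h : coprod.map f (M.map f) ≫ coprod.desc (M.η.app Y) (𝟙 (M.obj Y)) =
                 coprod.desc (M.η.app X) (𝟙 (M.obj X)) ≫ M.map f := by
               apply coprod.hom_ext
               · simp only [coprod.inl_map_assoc, coprod.inl_desc, coprod.inl_desc_assoc]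
                 exact M.η.naturality f
               · simp
                 erw [coprod.inr_desc, coprod.inr_desc]
             rw [h, Functor.map_comp_assoc]
             have := M.μ.naturality f
             dsimp at this
             rw [reassoc_of% this]
             simp
             erw [coprod.inr_desc_assoc, Category.assoc, Category.assoc, coprod.inr_map] }
  left_unit := by intro X; simp [μs]; erw [coprod.inl_desc]
  right_unit := by
    intro X
    dsimp [MsF, μs]
    apply coprod.hom_ext
    · simp
      erw [coprod.inl_desc]
    · simp
      erw [coprod.inr_desc, ← Functor.map_comp_assoc, coprod.inl_desc, ← Category.assoc, M.right_unit,
        Category.id_comp]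
  assoc := by
    intro X
    show (MsF M).map (μs M X) ≫ μs M X = μs M ((MsF M).obj X) ≫ μs M X
    dsimp only [MsF]
    have key : coprod.desc (𝟙 (X ⨿ M.obj X))
          (M.map (coprod.desc (M.η.app X) (𝟙 (M.obj X))) ≫ M.μ.app X ≫ coprod.inr) ≫
        coprod.desc (M.η.app X) (𝟙 (M.obj X)) =
        coprod.desc (M.η.app (X ⨿ M.obj X)) (𝟙 (M.obj (X ⨿ M.obj X))) ≫
          M.map (coprod.desc (M.η.app X) (𝟙 (M.obj X))) ≫ M.μ.app X := by
      have hnat := M.η.naturality (coprod.desc (M.η.app X) (𝟙 (M.obj X)))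
      dsimp at hnat
      apply coprod.hom_ext
      · simp only [μs, coprod.inl_desc_assoc, Category.id_comp, coprod.inl_desc,
          coprod.inl_desc_assoc]
        rw [← Category.assoc, ← hnat, Category.assoc, M.left_unit]
        exact (Category.comp_id (coprod.desc (M.η.app X) (𝟙 (M.obj X)))).symm
      · simp [μs, MsF]
        erw [coprod.inr_desc, coprod.inr_desc, coprod.inr_desc, Category.comp_id]
    have hnatμ := M.μ.naturality (coprod.desc (M.η.app X) (𝟙 (M.obj X)))
    dsimp at hnatμ
    apply coprod.hom_ext
    · simp [μs, MsF]
      erw [coprod.inl_desc_assoc, Category.id_comp, coprod.inl_desc]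
    · simp only [μs, MsF, coprod.inr_map_assoc, coprod.inr_desc, coprod.inr_desc_assoc]
      rw [← Functor.map_comp_assoc]
      erw [key]
      simp only [Functor.map_comp, Category.assoc]
      rw [reassoc_of% (M.assoc X), reassoc_of% hnatμ]
      simp
      erw [coprod.inr_desc]

/-- The category of `M`-semialgebras: objects are morphisms `a : MX ⟶ X`
satisfying only the associativity axiom `a ∘ Ma = a ∘ μ_X`. -/
structure SemiAlg (M : Monad C) where
  X : C
  a : M.obj X ⟶ X
  assoc : M.map a ≫ a = M.μ.app X ≫ a

instance (M : Monad C) : Category (SemiAlg M) where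
  Hom A B := { f : A.X ⟶ B.X // A.a ≫ f = M.map f ≫ B.a }
  id A := ⟨𝟙 A.X, by simp⟩
  comp {A B D} f g := ⟨f.1 ≫ g.1, by
    rw [← Category.assoc, f.2, Category.assoc, g.2, ← Category.assoc, ← Functor.map_comp]⟩
  id_comp f := by apply Subtype.ext; simp
  comp_id f := by apply Subtype.ext; simp
  assoc f g h := by apply Subtype.ext; simp

section Aux

variable (M : Monad C)

lemma SemiAlg.ext' {A B : SemiAlg M} (h1 : A.X = B.X) (h2 : HEq A.a B.a) : A = B := by
  cases A; cases B; cases h1; cases h2; rfl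

lemma SemiAlg.hom_hext {A B A' B' : SemiAlg M} (hA : A = A') (hB : B = B')
    (f : A ⟶ B) (g : A' ⟶ B') (h : HEq f.1 g.1) : HEq f g := by
  subst hA; subst hB; exact heq_of_eq (Subtype.ext (eq_of_heq h))

lemma Alg.ext' {A B : (MsMonad M).Algebra} (h1 : A.A = B.A) (h2 : HEq A.a B.a) : A = B := by
  cases A; cases B; cases h1; cases h2; rfl

lemma Alg.hom_hext {A B A' B' : (MsMonad M).Algebra} (hA : A = A') (hB : B = B')
    (f : A ⟶ B) (g : A' ⟶ B') (h : HEq f.f g.f) : HEq f g := by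
  subst hA; subst hB; exact heq_of_eq (Monad.Algebra.Hom.ext (eq_of_heq h))

/-- Key identity: `a ≫ η ≫ a = a` for a semialgebra. -/
lemma semialg_eta (A : SemiAlg M) : A.a ≫ M.η.app A.X ≫ A.a = A.a := by
  have h := M.η.naturality A.a
  dsimp at h
  rw [← Category.assoc, h, Category.assoc, A.assoc, ← Category.assoc, M.left_unit]
  simp

/-- Forward functor: a semialgebra `a` gives an `M^s`-algebra `[id, a]`. -/
noncomputable def toEM : SemiAlg M ⥤ (MsMonad M).Algebra where
  obj A :=
  { A := A.X
    a := coprod.desc (𝟙 A.X) A.a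
    unit := by simp [MsMonad]; erw [coprod.inl_desc]
    assoc := by
      show μs M A.X ≫ _ = (MsF M).map _ ≫ _
      dsimp [μs, MsF]
      apply coprod.hom_ext
      · simp
        erw [coprod.inl_desc_assoc, Category.id_comp, coprod.inl_desc]
      · have h2 : coprod.desc (M.η.app A.X) (𝟙 (M.obj A.X)) ≫ A.a =
            coprod.desc (𝟙 A.X) A.a ≫ M.η.app A.X ≫ A.a := by
          apply coprod.hom_ext
          · simp
            exact (coprod.inl_desc _ _).trans (coprod.inl_desc _ _).symm
          · simp [semialg_eta M A]
        simp only [coprod.inr_desc_assoc, Category.assoc, coprod.inr_desc, coprod.inr_map_assoc]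
        rw [← A.assoc, ← Functor.map_comp_assoc]
        dsimp only [Functor.id_obj] at h2 ⊢
        rw [h2]
        simp only [Functor.map_comp, Category.assoc]
        rw [A.assoc, ← Category.assoc (M.map (M.η.app A.X)), M.right_unit]
        simp }
  map {A B} f :=
  { f := f.1
    h := by
      show (MsF M).map f.1 ≫ _ = _
      dsimp [MsF]
      apply coprod.hom_ext
      · simp
        exact (coprod.inl_desc _ _).trans ((Category.id_comp _).symm.trans (coprod.inl_desc_assoc _ _ _).symm)
      · simp [f.2]
        exact (coprod.inr_desc _ _).trans (f.2.symm.trans (coprod.inr_desc_assoc _ _ _).symm) }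
  map_id A := by apply Monad.Algebra.Hom.ext; rfl
  map_comp f g := by apply Monad.Algebra.Hom.ext; rfl

/-- Backward functor: an `M^s`-algebra `b` gives the semialgebra `b ∘ inr`. -/
noncomputable def fromEM : (MsMonad M).Algebra ⥤ SemiAlg M where
  obj B :=
  { X := B.A
    a := coprod.inr ≫ B.a
    assoc := by
      show M.map (coprod.inr ≫ B.a) ≫ coprod.inr ≫ B.a = M.μ.app B.A ≫ coprod.inr ≫ B.a
      have e1 : (coprod.inr : M.obj B.A ⟶ B.A ⨿ M.obj B.A) ≫
          coprod.desc (M.η.app B.A) (𝟙 (M.obj B.A)) = 𝟙 _ := coprod.inr_desc _ _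
      have h'' : M.map (coprod.inr : M.obj B.A ⟶ B.A ⨿ M.obj B.A) ≫ coprod.inr ≫
          (MsMonad M).μ.app B.A ≫ B.a =
          M.map (coprod.inr : M.obj B.A ⟶ B.A ⨿ M.obj B.A) ≫ coprod.inr ≫
          (MsMonad M).map B.a ≫ B.a := by erw [B.assoc]; rfl
      have l : M.map (coprod.inr : M.obj B.A ⟶ B.A ⨿ M.obj B.A) ≫ coprod.inr ≫
          (MsMonad M).μ.app B.A ≫ B.a = M.μ.app B.A ≫ coprod.inr ≫ B.a := by
        show M.map coprod.inr ≫ coprod.inr ≫ coprod.desc _ _ ≫ B.a = _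
        erw [coprod.inr_desc_assoc, Category.assoc, ← Functor.map_comp_assoc, e1, M.map_id,
          Category.id_comp, Category.assoc]
        rfl
      have r : M.map (coprod.inr : M.obj B.A ⟶ B.A ⨿ M.obj B.A) ≫ coprod.inr ≫
          (MsMonad M).map B.a ≫ B.a = M.map (coprod.inr ≫ B.a) ≫ coprod.inr ≫ B.a := by
        show M.map coprod.inr ≫ coprod.inr ≫ coprod.map B.a (M.map B.a) ≫ B.a = _
        erw [coprod.inr_map_assoc, ← Functor.map_comp_assoc]
      exact r.symm.trans (h''.symm.trans l) }
  map {A B} f := ⟨f.f, by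
    have h' := congrArg (fun t => (coprod.inr : M.obj A.A ⟶ A.A ⨿ M.obj A.A) ≫ t) f.h
    dsimp only [MsMonad, MsF] at h'
    simp only [coprod.inr_map_assoc] at h'
    show (coprod.inr ≫ A.a) ≫ f.f = M.map f.f ≫ coprod.inr ≫ B.a
    refine (Category.assoc _ _ _).trans ?_
    exact h'.symm⟩
  map_id A := rfl
  map_comp f g := rfl

lemma toEM_fromEM : toEM M ⋙ fromEM M = 𝟭 (SemiAlg M) := by
  have hobj : ∀ A : SemiAlg M, (toEM M ⋙ fromEM M).obj A = A := by
    intro A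
    refine SemiAlg.ext' M rfl ?_
    show HEq (coprod.inr ≫ coprod.desc (𝟙 A.X) A.a) A.a
    rw [coprod.inr_desc]
  apply Functor.hext hobj
  intro A B f
  exact SemiAlg.hom_hext M (hobj A) (hobj B) _ _ HEq.rfl

lemma fromEM_toEM : fromEM M ⋙ toEM M = 𝟭 (MsMonad M).Algebra := by
  have hobj : ∀ B : (MsMonad M).Algebra, (fromEM M ⋙ toEM M).obj B = B := by
    intro B
    refine Alg.ext' M rfl (heq_of_eq ?_)
    show coprod.desc (𝟙 B.A) (coprod.inr ≫ B.a) = B.a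
    apply coprod.hom_ext
    · rw [coprod.inl_desc]
      have h := B.unit
      dsimp [MsMonad] at h ⊢
      exact h.symm
    · rw [coprod.inr_desc]
  apply Functor.hext hobj
  intro A B f
  exact Alg.hom_hext M (hobj A) (hobj B) _ _ HEq.rfl

end Aux

/-- The category of `M`-semialgebras is isomorphic to the Eilenberg--Moore category
of the semifree monad `M^s`, via `a ↦ [id_X, a]`. -/
theorem semialg_iso_semifree_algebras (M : Monad C) :
    ∃ e : Cat.of (SemiAlg M) ≅ Cat.of ((MsMonad M).Algebra),
      ∀ A : SemiAlg M,
        ((e.hom.toFunctor.obj A).A = A.X) ∧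
        HEq (e.hom.toFunctor.obj A).a (coprod.desc (𝟙 A.X) A.a) := by
  refine ⟨⟨(toEM M).toCatHom, (fromEM M).toCatHom, ?_, ?_⟩, fun A => ⟨rfl, HEq.rfl⟩⟩
  · exact Cat.Hom.ext (toEM_fromEM M)
  · exact Cat.Hom.ext (fromEM_toEM M)
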